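/- arXiv:2306.07947 — 4 statements merged into one kernel-verified Lean document; each statement's English description precedes it below -/
import Mathlib

section
/- In the Clifford algebra with generators ψ_i, ψ*_j (i, j ∈ ℤ) and relations {ψ_i, ψ_j} = {ψ*_i, ψ*_j} = 0, {ψ_i, ψ*_j} = δ_{i+j,0}, the normally ordered quadratic elements E_{ij} := :ψ_i ψ*_{-j}: satisfy [E_{ij}, E_{kl}] = δ_{jk} E_{il} − δ_{li} E_{kj} + α(E_{ij}, E_{kl}), where α(E_{ij}, E_{ji}) = 1 if i ≤ 0 and j ≥ 1, α(E_{ji}, E_{ij}) = −1 if i ≤ 0 and j ≥ 1, and α = 0 otherwise, the identity holding as operators on the fermionic Fock space. -/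
lemma quad_comm {R : Type*} [Ring R] (a b c d e1 e2 : R)
    (h1 : b * c + c * b = e1) (h2 : a * d + d * a = e2)
    (h3 : a * c + c * a = 0) (h4 : b * d + d * b = 0)
    (he1 : ∀ x, e1 * x = x * e1) (he2 : ∀ x, e2 * x = x * e2) :
    a * b * (c * d) - c * d * (a * b) = e1 * (a * d) - e2 * (c * b) := by
  have hbc : b * c = e1 - c * b := eq_sub_of_add_eq h1
  have had : a * d = e2 - d * a := eq_sub_of_add_eq h2
  have hac : a * c = -(c * a) := eq_neg_of_add_eq_zero_left h3
  have hbd : b * d = -(d * b) := eq_neg_of_add_eq_zero_left h4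
  calc a * b * (c * d) - c * d * (a * b)
      = a * (b * c) * d - c * d * (a * b) := by noncomm_ring
    _ = a * (e1 - c * b) * d - c * d * (a * b) := by rw [hbc]
    _ = a * e1 * d - (a * c) * (b * d) - c * d * (a * b) := by noncomm_ring
    _ = a * e1 * d - (-(c * a)) * (-(d * b)) - c * d * (a * b) := by rw [hac, hbd]
    _ = a * e1 * d - c * (a * d) * b - c * d * (a * b) := by noncomm_ring
    _ = a * e1 * d - c * (e2 - d * a) * b - c * d * (a * b) := by rw [had]
    _ = a * e1 * d - c * e2 * b := by noncomm_ring
    _ = e1 * (a * d) - e2 * (c * b) := by rw [← he1 a, ← he2 c]; noncomm_ring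



/-- In any representation `F` of the Clifford algebra with generators `ψ_i, ψ*_j` and
relations `{ψ_i, ψ_j} = {ψ*_i, ψ*_j} = 0`, `{ψ_i, ψ*_j} = δ_{i+j,0}` (in particular on the
fermionic Fock space, which is such a representation), the normally ordered quadratic
operators `E_{ij} = :ψ_i ψ*_{-j}:` satisfy
`[E_{ij}, E_{kl}] = δ_{jk} E_{il} - δ_{li} E_{kj} + α(E_{ij}, E_{kl}) · 1`,
where `α(E_{ij}, E_{ji}) = 1` if `i ≤ 0, j ≥ 1`, `α(E_{ji}, E_{ij}) = -1` if `i ≤ 0, j ≥ 1`,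
and `α = 0` otherwise. -/
theorem stmt9 (F : Type*) [AddCommGroup F] [Module ℂ F]
    (ψ ψd : ℤ → Module.End ℂ F)
    (hψψ : ∀ i j, ψ i * ψ j + ψ j * ψ i = 0)
    (hψdψd : ∀ i j, ψd i * ψd j + ψd j * ψd i = 0)
    (hψψd : ∀ i j, ψ i * ψd j + ψd j * ψ i = if i + j = 0 then 1 else 0)
    (E : ℤ → ℤ → Module.End ℂ F)
    (hE : ∀ i j, E i j = if i ≤ 0 then -(ψd (-j) * ψ i) else ψ i * ψd (-j))
    (α : ℤ → ℤ → ℤ → ℤ → ℂ)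
    (hα : ∀ i j k l, α i j k l =
      if k = j ∧ l = i ∧ i ≤ 0 ∧ 1 ≤ j then 1
      else if k = j ∧ l = i ∧ j ≤ 0 ∧ 1 ≤ i then -1 else 0) :
    ∀ i j k l, E i j * E k l - E k l * E i j =
      (if j = k then E i l else 0) - (if l = i then E k j else 0) +
        α i j k l • (1 : Module.End ℂ F) := by
  have key : ∀ x y, E x y = ψ x * ψd (-y) -
      (if x ≤ 0 ∧ x + -y = 0 then (1 : Module.End ℂ F) else 0) := by
    intro x y
    rw [hE]
    have h := hψψd x (-y)
    by_cases hx : x ≤ 0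
    · have hd : ψd (-y) * ψ x =
          (if x + -y = 0 then (1 : Module.End ℂ F) else 0) - ψ x * ψd (-y) :=
        eq_sub_of_add_eq (by rw [add_comm]; exact h)
      rw [if_pos hx, hd]
      by_cases hxy : x + -y = 0
      · rw [if_pos hxy, if_pos ⟨hx, hxy⟩]; noncomm_ring
      · rw [if_neg hxy, if_neg (by tauto)]; noncomm_ring
    · rw [if_neg hx, if_neg (by tauto)]; noncomm_ring
  intro i j k l
  have comm := quad_comm (ψ i) (ψd (-j)) (ψ k) (ψd (-l))
    (if k + -j = 0 then (1 : Module.End ℂ F) else 0)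
    (if i + -l = 0 then (1 : Module.End ℂ F) else 0)
    (by rw [add_comm]; exact hψψd k (-j)) (hψψd i (-l))
    (hψψ i k) (hψdψd (-j) (-l))
    (by intro x; split_ifs <;> simp) (by intro x; split_ifs <;> simp)
  have expand : (ψ i * ψd (-j) - (if i ≤ 0 ∧ i + -j = 0 then (1 : Module.End ℂ F) else 0)) *
        (ψ k * ψd (-l) - (if k ≤ 0 ∧ k + -l = 0 then (1 : Module.End ℂ F) else 0)) -
      (ψ k * ψd (-l) - (if k ≤ 0 ∧ k + -l = 0 then (1 : Module.End ℂ F) else 0)) *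
        (ψ i * ψd (-j) - (if i ≤ 0 ∧ i + -j = 0 then (1 : Module.End ℂ F) else 0)) =
      ψ i * ψd (-j) * (ψ k * ψd (-l)) - ψ k * ψd (-l) * (ψ i * ψd (-j)) := by
    split_ifs <;> noncomm_ring
  rw [key i j, key k l, key i l, key k j, hα, expand, comm]
  split_ifs <;> first
    | (exfalso; omega)
    | (simp only [one_smul, neg_smul, zero_smul]; noncomm_ring)
end

section
/- The function α on pairs of matrix units defined by α(E_{ij}, E_{ji}) = 1 and α(E_{ji}, E_{ij}) = −1 for i ≤ 0, j ≥ 1, and α = 0 otherwise, extends to a Lie algebra 2-cocycle on the Lie algebra of ℤ×ℤ matrices with finitely many nonzero diagonals. -/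
/-- Matrices `(a_{ij})_{i,j ∈ ℤ}` with finitely many nonzero diagonals. -/
def HasFinDiag (a : ℤ → ℤ → ℂ) : Prop :=
  ∃ d : ℕ, ∀ i j : ℤ, (d : ℤ) < |i - j| → a i j = 0

/-- The commutator bracket on `ℤ × ℤ` matrices (the sum is finite on matrices with finitely
many nonzero diagonals). -/
noncomputable def matBrk (a b : ℤ → ℤ → ℂ) : ℤ → ℤ → ℂ :=
  fun i j => ∑ᶠ k : ℤ, (a i k * b k j - b i k * a k j)

/-- The matrix unit `E_{ij}`. -/
def matUnit (i j : ℤ) : ℤ → ℤ → ℂ :=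
  fun p q => if p = i ∧ q = j then 1 else 0

open Function Finset

/-- Diagonal entries of the projection `J`. -/
noncomputable def Jd (i : ℤ) : ℂ := if i ≤ 0 then 1 else 0

/-- `mu a = [J, a]`, a finitely supported matrix when `a` has finitely many diagonals. -/
noncomputable def mu (a : ℤ → ℤ → ℂ) (i j : ℤ) : ℂ := (Jd i - Jd j) * a i j

/-- The cocycle: `α(a,b) = Tr([J,a]·b)`. -/
noncomputable def alph (a b : ℤ → ℤ → ℂ) : ℂ :=
  ∑ᶠ p : ℤ × ℤ, mu a p.1 p.2 * b p.2 p.1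

/-- Integer-valued diagonal bound. -/
def fdB (a : ℤ → ℤ → ℂ) (d : ℤ) : Prop :=
  ∀ i j, a i j ≠ 0 → i - j ≤ d ∧ j - i ≤ d

lemma exists_fdB {a : ℤ → ℤ → ℂ} (h : HasFinDiag a) : ∃ d : ℤ, 0 ≤ d ∧ fdB a d := by
  obtain ⟨d, hd⟩ := h
  refine ⟨(d : ℤ), Int.ofNat_nonneg d, fun i j hij => ?_⟩
  have h2 : ¬ (d : ℤ) < |i - j| := fun hlt => hij (hd i j hlt)
  rw [not_lt] at h2
  have := abs_le.mp h2
  omega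

lemma Jd_ne {i j : ℤ} (h : Jd i - Jd j ≠ 0) : (i ≤ 0 ∧ 1 ≤ j) ∨ (j ≤ 0 ∧ 1 ≤ i) := by
  unfold Jd at h
  by_cases hi : i ≤ 0 <;> by_cases hj : j ≤ 0 <;> simp [hi, hj] at h <;> omega

lemma mu_ne {x : ℤ → ℤ → ℂ} {dx i j : ℤ} (hx : fdB x dx) (h : mu x i j ≠ 0) :
    -dx ≤ i ∧ i ≤ dx ∧ -dx ≤ j ∧ j ≤ dx := by
  have h1 : Jd i - Jd j ≠ 0 := left_ne_zero_of_mul h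
  have h2 : x i j ≠ 0 := right_ne_zero_of_mul h
  have h3 := Jd_ne h1
  have h4 := hx i j h2
  omega

lemma alph_fin {x : ℤ → ℤ → ℂ} {dx : ℤ} (hx : fdB x dx) (y : ℤ → ℤ → ℂ) :
    (support fun p : ℤ × ℤ => mu x p.1 p.2 * y p.2 p.1).Finite := by
  apply Set.Finite.subset (Finset.finite_toSet (Finset.Icc (-dx) dx ×ˢ Finset.Icc (-dx) dx))
  intro p hp
  have h1 : mu x p.1 p.2 ≠ 0 := left_ne_zero_of_mul hp
  have h2 := mu_ne hx h1
  simp only [Finset.coe_product, Set.mem_prod, Finset.mem_coe, Finset.mem_Icc]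
  omega

lemma alph_eq_sum {x y : ℤ → ℤ → ℂ} {s : Finset ℤ}
    (h : ∀ i j : ℤ, mu x i j * y j i ≠ 0 → i ∈ s ∧ j ∈ s) :
    alph x y = ∑ i ∈ s, ∑ j ∈ s, mu x i j * y j i := by
  rw [alph, finsum_eq_sum_of_support_subset _ (s := s ×ˢ s)
    (fun p hp => Finset.mem_coe.mpr (Finset.mem_product.mpr (h p.1 p.2 hp)))]
  exact Finset.sum_product s s _

lemma matBrk_fdB {a b : ℤ → ℤ → ℂ} {da db : ℤ} (ha : fdB a da) (hb : fdB b db) :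
    fdB (matBrk a b) (da + db) := by
  intro i j h
  by_contra hc
  apply h
  have hz : ∀ k : ℤ, a i k * b k j - b i k * a k j = 0 := by
    intro k
    have h1 : a i k * b k j = 0 := by
      by_cases h2 : a i k = 0
      · rw [h2, zero_mul]
      by_cases h3 : b k j = 0
      · rw [h3, mul_zero]
      have := ha i k h2
      have := hb k j h3
      omega
    have h4 : b i k * a k j = 0 := by
      by_cases h2 : b i k = 0
      · rw [h2, zero_mul]
      by_cases h3 : a k j = 0
      · rw [h3, mul_zero]
      have := hb i k h2
      have := ha k j h3
      omega
    rw [h1, h4, sub_zero]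
  calc matBrk a b i j = ∑ᶠ _ : ℤ, (0 : ℂ) := finsum_congr hz
    _ = 0 := finsum_zero

lemma matBrk_eq_sum {a b : ℤ → ℤ → ℂ} {s : Finset ℤ} (i j : ℤ)
    (h : ∀ k, a i k * b k j - b i k * a k j ≠ 0 → k ∈ s) :
    matBrk a b i j = ∑ k ∈ s, (a i k * b k j - b i k * a k j) :=
  finsum_eq_sum_of_support_subset _ (fun k hk => Finset.mem_coe.mpr (h k hk))

lemma cyc3 (s : Finset ℤ) (F : ℤ → ℤ → ℤ → ℂ) :
    (∑ i ∈ s, ∑ j ∈ s, ∑ k ∈ s, F i j k) = ∑ i ∈ s, ∑ j ∈ s, ∑ k ∈ s, F k i j := by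
  rw [Finset.sum_comm]
  exact Finset.sum_congr rfl fun _ _ => Finset.sum_comm

lemma cyclic_zero (s : Finset ℤ) (a b c : ℤ → ℤ → ℂ) :
    (∑ i ∈ s, ∑ j ∈ s, (Jd i - Jd j) * (∑ k ∈ s, (a i k * b k j - b i k * a k j)) * c j i) +
    (∑ i ∈ s, ∑ j ∈ s, (Jd i - Jd j) * (∑ k ∈ s, (b i k * c k j - c i k * b k j)) * a j i) +
    (∑ i ∈ s, ∑ j ∈ s, (Jd i - Jd j) * (∑ k ∈ s, (c i k * a k j - a i k * c k j)) * b j i)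
      = 0 := by
  have expand : ∀ x y z : ℤ → ℤ → ℂ,
      (∑ i ∈ s, ∑ j ∈ s, (Jd i - Jd j) * (∑ k ∈ s, (x i k * y k j - y i k * x k j)) * z j i)
      = (∑ i ∈ s, ∑ j ∈ s, ∑ k ∈ s, (Jd i - Jd j) * (x i k * y k j) * z j i)
        - ∑ i ∈ s, ∑ j ∈ s, ∑ k ∈ s, (Jd i - Jd j) * (y i k * x k j) * z j i := by
    intro x y z
    rw [← Finset.sum_sub_distrib]
    refine Finset.sum_congr rfl fun i _ => ?_
    rw [← Finset.sum_sub_distrib]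
    refine Finset.sum_congr rfl fun j _ => ?_
    rw [Finset.mul_sum, Finset.sum_mul, ← Finset.sum_sub_distrib]
    exact Finset.sum_congr rfl fun k _ => by ring
  rw [expand a b c, expand b c a, expand c a b]
  have e1 : (∑ i ∈ s, ∑ j ∈ s, ∑ k ∈ s, (Jd i - Jd j) * (b i k * c k j) * a j i)
      = (∑ i ∈ s, ∑ j ∈ s, ∑ k ∈ s, (Jd k - Jd i) * (b k j * c j i) * a i k) :=
    cyc3 s (fun i j k => (Jd i - Jd j) * (b i k * c k j) * a j i)
  have e2 : (∑ i ∈ s, ∑ j ∈ s, ∑ k ∈ s, (Jd i - Jd j) * (c i k * b k j) * a j i)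
      = (∑ i ∈ s, ∑ j ∈ s, ∑ k ∈ s, (Jd j - Jd k) * (c j i * b i k) * a k j) :=
    (cyc3 s (fun i j k => (Jd i - Jd j) * (c i k * b k j) * a j i)).trans
      (cyc3 s (fun i j k => (Jd k - Jd i) * (c k j * b j i) * a i k))
  have e3 : (∑ i ∈ s, ∑ j ∈ s, ∑ k ∈ s, (Jd i - Jd j) * (c i k * a k j) * b j i)
      = (∑ i ∈ s, ∑ j ∈ s, ∑ k ∈ s, (Jd j - Jd k) * (c j i * a i k) * b k j) :=
    (cyc3 s (fun i j k => (Jd i - Jd j) * (c i k * a k j) * b j i)).trans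
      (cyc3 s (fun i j k => (Jd k - Jd i) * (c k j * a j i) * b i k))
  have e4 : (∑ i ∈ s, ∑ j ∈ s, ∑ k ∈ s, (Jd i - Jd j) * (a i k * c k j) * b j i)
      = (∑ i ∈ s, ∑ j ∈ s, ∑ k ∈ s, (Jd k - Jd i) * (a k j * c j i) * b i k) :=
    cyc3 s (fun i j k => (Jd i - Jd j) * (a i k * c k j) * b j i)
  rw [e1, e2, e3, e4]
  simp only [← Finset.sum_sub_distrib, ← Finset.sum_add_distrib]
  refine Finset.sum_eq_zero fun i _ => Finset.sum_eq_zero fun j _ => Finset.sum_eq_zero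
    fun k _ => by ring


lemma alph_add_left {a b : ℤ → ℤ → ℂ} {da db : ℤ} (ha : fdB a da) (hb : fdB b db)
    (c : ℤ → ℤ → ℂ) : alph (a + b) c = alph a c + alph b c := by
  rw [alph, alph, alph, ← finsum_add_distrib (alph_fin ha c) (alph_fin hb c)]
  apply finsum_congr
  intro p
  simp only [mu, Pi.add_apply]
  ring

lemma alph_add_right {a : ℤ → ℤ → ℂ} {da : ℤ} (ha : fdB a da) (b c : ℤ → ℤ → ℂ) :
    alph a (b + c) = alph a b + alph a c := by
  rw [alph, alph, alph, ← finsum_add_distrib (alph_fin ha b) (alph_fin ha c)]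
  apply finsum_congr
  intro p
  simp only [mu, Pi.add_apply]
  ring

lemma alph_smul_left {a : ℤ → ℤ → ℂ} {da : ℤ} (ha : fdB a da) (t : ℂ) (b : ℤ → ℤ → ℂ) :
    alph (t • a) b = t * alph a b := by
  rw [alph, alph, mul_finsum _ t]
  apply finsum_congr
  intro p
  simp only [mu, Pi.smul_apply, smul_eq_mul]
  ring

lemma alph_smul_right {a : ℤ → ℤ → ℂ} {da : ℤ} (ha : fdB a da) (t : ℂ) (b : ℤ → ℤ → ℂ) :
    alph a (t • b) = t * alph a b := by
  rw [alph, alph, mul_finsum _ t]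
  apply finsum_congr
  intro p
  simp only [mu, Pi.smul_apply, smul_eq_mul]
  ring

lemma alph_antisym {a b : ℤ → ℤ → ℂ} {da db : ℤ} (ha0 : 0 ≤ da) (hb0 : 0 ≤ db)
    (ha : fdB a da) (hb : fdB b db) : alph b a = -alph a b := by
  set m : ℤ := max da db with hm
  have hsub : ∀ (x : ℤ → ℤ → ℂ) (dx : ℤ), dx ≤ m → fdB x dx → ∀ (y : ℤ → ℤ → ℂ),
      ∀ i j : ℤ, mu x i j * y j i ≠ 0 → i ∈ Finset.Icc (-m) m ∧ j ∈ Finset.Icc (-m) m := by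
    intro x dx hdx hx y i j h
    have := mu_ne hx (left_ne_zero_of_mul h)
    exact ⟨Finset.mem_Icc.mpr (by omega), Finset.mem_Icc.mpr (by omega)⟩
  rw [alph_eq_sum (hsub b db (le_max_right _ _) hb a),
    alph_eq_sum (hsub a da (le_max_left _ _) ha b), eq_neg_iff_add_eq_zero]
  rw [Finset.sum_comm]
  rw [← Finset.sum_add_distrib]
  refine Finset.sum_eq_zero fun i _ => ?_
  rw [← Finset.sum_add_distrib]
  refine Finset.sum_eq_zero fun j _ => ?_
  simp only [mu]
  ring

lemma alph_cocycle {a b c : ℤ → ℤ → ℂ} (ha' : HasFinDiag a) (hb' : HasFinDiag b)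
    (hc' : HasFinDiag c) :
    alph (matBrk a b) c + alph (matBrk b c) a + alph (matBrk c a) b = 0 := by
  obtain ⟨da, ha0, ha⟩ := exists_fdB ha'
  obtain ⟨db, hb0, hb⟩ := exists_fdB hb'
  obtain ⟨dc, hc0, hc⟩ := exists_fdB hc'
  set B : ℤ := da + db + dc with hB
  have step : ∀ (x y z : ℤ → ℤ → ℂ) (dx dy dz : ℤ), 0 ≤ dx → 0 ≤ dy → 0 ≤ dz →
      dx + dy + dz ≤ B → fdB x dx → fdB y dy → fdB z dz →
      alph (matBrk x y) z =
        ∑ i ∈ Finset.Icc (-B) B, ∑ j ∈ Finset.Icc (-B) B,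
          (Jd i - Jd j) * (∑ k ∈ Finset.Icc (-B) B, (x i k * y k j - y i k * x k j)) * z j i := by
    intro x y z dx dy dz hx0 hy0 hz0 hBle hx hy hz
    have hxy := matBrk_fdB hx hy
    have houter : ∀ i j : ℤ, mu (matBrk x y) i j * z j i ≠ 0 →
        i ∈ Finset.Icc (-B) B ∧ j ∈ Finset.Icc (-B) B := by
      intro i j h
      have := mu_ne hxy (left_ne_zero_of_mul h)
      exact ⟨Finset.mem_Icc.mpr (by omega), Finset.mem_Icc.mpr (by omega)⟩
    rw [alph_eq_sum houter]
    refine Finset.sum_congr rfl fun i _ => Finset.sum_congr rfl fun j _ => ?_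
    simp only [mu]
    by_cases hJ : Jd i - Jd j = 0
    · rw [hJ]; ring
    by_cases hzz : z j i = 0
    · rw [hzz]; ring
    have hij := Jd_ne hJ
    have hzb := hz j i hzz
    rw [matBrk_eq_sum i j ?_]
    intro k hk
    have hxory : x i k ≠ 0 ∨ y i k ≠ 0 := by
      by_contra hcon
      push_neg at hcon
      apply hk
      rw [hcon.1, hcon.2]
      ring
    apply Finset.mem_Icc.mpr
    rcases hxory with h' | h'
    · have := hx i k h'; omega
    · have := hy i k h'; omega
  rw [step a b c da db dc ha0 hb0 hc0 (by omega) ha hb hc,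
    step b c a db dc da hb0 hc0 ha0 (by omega) hb hc ha,
    step c a b dc da db hc0 ha0 hb0 (by omega) hc ha hb]
  exact cyclic_zero _ a b c

lemma matUnit_fdB (i j : ℤ) : fdB (matUnit i j) |i - j| := by
  intro p q h
  have : p = i ∧ q = j := by
    by_contra hc
    apply h
    simp [matUnit, hc]
  obtain ⟨rfl, rfl⟩ := this
  constructor <;> cases abs_cases (p - q) <;> omega

lemma alph_unit (i j k l : ℤ) :
    alph (matUnit i j) (matUnit k l) = (Jd i - Jd j) * (if j = k ∧ i = l then 1 else 0) := by
  rw [alph, finsum_eq_single _ ((i, j) : ℤ × ℤ) ?_]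
  · simp [mu, matUnit]
  · intro p hp
    have h0 : matUnit i j p.1 p.2 = 0 := by
      simp only [matUnit, ite_eq_right_iff, one_ne_zero]
      rintro ⟨h1, h2⟩
      exact absurd (Prod.ext h1 h2) hp
    simp [mu, h0]

/-- The function `α` with `α(E_{ij}, E_{ji}) = 1`, `α(E_{ji}, E_{ij}) = -1` for
`i ≤ 0, j ≥ 1`, and `α = 0` on all other pairs of matrix units, extends to a Lie algebra
2-cocycle (bilinear, antisymmetric, Jacobi-type identity) on the Lie algebra `ā_∞` of
`ℤ × ℤ` matrices with finitely many nonzero diagonals. -/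
theorem stmt10 :
    ∃ α : (ℤ → ℤ → ℂ) → (ℤ → ℤ → ℂ) → ℂ,
      (∀ a b c, HasFinDiag a → HasFinDiag b → HasFinDiag c →
        α (a + b) c = α a c + α b c ∧ α a (b + c) = α a b + α a c) ∧
      (∀ (t : ℂ) a b, HasFinDiag a → HasFinDiag b →
        α (t • a) b = t * α a b ∧ α a (t • b) = t * α a b) ∧
      (∀ a b, HasFinDiag a → HasFinDiag b → α b a = -α a b) ∧
      (∀ a b c, HasFinDiag a → HasFinDiag b → HasFinDiag c →
        α (matBrk a b) c + α (matBrk b c) a + α (matBrk c a) b = 0) ∧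
      (∀ i j : ℤ, i ≤ 0 → 1 ≤ j →
        α (matUnit i j) (matUnit j i) = 1 ∧ α (matUnit j i) (matUnit i j) = -1) ∧
      (∀ i j k l : ℤ, ¬(k = j ∧ l = i ∧ ((i ≤ 0 ∧ 1 ≤ j) ∨ (j ≤ 0 ∧ 1 ≤ i))) →
        α (matUnit i j) (matUnit k l) = 0) := by
  refine ⟨alph, ?_, ?_, ?_, ?_, ?_, ?_⟩
  · intro a b c ha hb _
    obtain ⟨da, _, ha⟩ := exists_fdB ha
    obtain ⟨db, _, hb⟩ := exists_fdB hb
    exact ⟨alph_add_left ha hb c, alph_add_right ha b c⟩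
  · intro t a b ha _
    obtain ⟨da, _, ha⟩ := exists_fdB ha
    exact ⟨alph_smul_left ha t b, alph_smul_right ha t b⟩
  · intro a b ha hb
    obtain ⟨da, ha0, ha⟩ := exists_fdB ha
    obtain ⟨db, hb0, hb⟩ := exists_fdB hb
    exact alph_antisym ha0 hb0 ha hb
  · intro a b c ha hb hc
    exact alph_cocycle ha hb hc
  · intro i j hi hj
    have hj' : ¬ j ≤ 0 := by omega
    constructor
    · rw [alph_unit]
      simp [Jd, hi, hj']
    · rw [alph_unit]
      simp [Jd, hi, hj']
  · intro i j k l h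
    rw [alph_unit]
    by_cases hkl : j = k ∧ i = l
    · have hcond : ¬((i ≤ 0 ∧ 1 ≤ j) ∨ (j ≤ 0 ∧ 1 ≤ i)) := fun hc =>
        h ⟨hkl.1.symm, hkl.2.symm, hc⟩
      have hJ : Jd i = Jd j := by
        unfold Jd
        by_cases hi : i ≤ 0 <;> by_cases hj : j ≤ 0 <;> simp [hi, hj]
        · exact absurd (Or.inl ⟨hi, by omega⟩) hcond
        · exact absurd (Or.inr ⟨hj, by omega⟩) hcond
      simp [hJ]
    · simp [hkl]
end

section
/- In the Lie algebra a_∞ = ā_∞ ⊕ ℂc (central extension by the cocycle α), the elements Λ_j = Σ_{k∈ℤ} E_{k,k+j} satisfy the Heisenberg relations [Λ_i, Λ_j] = i δ_{i+j,0} c. -/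
/-- The 2-cocycle of `a_∞`: `α(a, b) = Σ_{i ≤ 0 < j} (a_{ij} b_{ji} - a_{ji} b_{ij})`,
the bilinear extension of `α(E_{ij}, E_{ji}) = -α(E_{ji}, E_{ij}) = 1` for `i ≤ 0, j ≥ 1`. -/
noncomputable def alphaCocycle (a b : ℤ → ℤ → ℂ) : ℂ :=
  ∑ᶠ p : ℤ × ℤ, if p.1 ≤ 0 ∧ 1 ≤ p.2 then
    a p.1 p.2 * b p.2 p.1 - a p.2 p.1 * b p.1 p.2 else 0

/-- `Λ_j = Σ_{k ∈ ℤ} E_{k, k+j}`, the matrix of the `j`-th diagonal. -/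
def Lam (j : ℤ) : ℤ → ℤ → ℂ :=
  fun p q => if q = p + j then 1 else 0

/-- In `a_∞ = ā_∞ ⊕ ℂc` (central extension by the cocycle `α`), the elements
`Λ_j` satisfy the Heisenberg relations `[Λ_i, Λ_j] = i δ_{i+j,0} c`: the matrix part of
the bracket vanishes and the central part equals `i δ_{i+j,0}`. -/
theorem stmt11 (i j : ℤ) :
    matBrk (Lam i) (Lam j) = 0 ∧
      alphaCocycle (Lam i) (Lam j) = if i + j = 0 then (i : ℂ) else 0 := by
  constructor
  · funext p q
    show (∑ᶠ k : ℤ, (Lam i p k * Lam j k q - Lam j p k * Lam i k q)) = 0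
    rcases eq_or_ne i j with h | h
    · subst h
      simp
    · have hsupp : (Function.support fun k : ℤ =>
          Lam i p k * Lam j k q - Lam j p k * Lam i k q) ⊆ ↑({p + i, p + j} : Finset ℤ) := by
        intro k hk
        simp only [Function.mem_support, Lam] at hk
        simp only [Finset.coe_insert, Finset.coe_singleton, Set.mem_insert_iff,
          Set.mem_singleton_iff]
        by_contra hc
        push_neg at hc
        simp [if_neg hc.1, if_neg hc.2] at hk
      rw [finsum_eq_finset_sum_of_support_subset _ hsupp,
        Finset.sum_insert (by simp; omega), Finset.sum_singleton]
      have e : p + i + j = p + j + i := by ring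
      simp only [Lam, e]
      split_ifs <;> first | ring1 | (exfalso; omega)
  · rcases eq_or_ne (i + j) 0 with hij | hij
    · have hj : j = -i := by omega
      subst hj
      rw [if_pos hij]
      unfold alphaCocycle
      rcases lt_trichotomy i 0 with hi | hi | hi
      · -- i ≤ -1
        have hsupp : (Function.support fun p : ℤ × ℤ => if p.1 ≤ 0 ∧ 1 ≤ p.2 then
            Lam i p.1 p.2 * Lam (-i) p.2 p.1 - Lam i p.2 p.1 * Lam (-i) p.1 p.2 else 0)
            ⊆ ↑((Finset.Icc (1:ℤ) (-i)).image (fun k => ((k + i, k) : ℤ × ℤ))) := by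
          intro p hp
          rw [Function.mem_support] at hp
          have h1 : p.1 ≤ 0 ∧ 1 ≤ p.2 := by
            by_contra h; rw [if_neg h] at hp; exact hp rfl
          rw [if_pos h1] at hp
          simp only [Lam] at hp
          rw [if_neg (by omega : ¬ p.2 = p.1 + i)] at hp
          have h2 : p.1 = p.2 + i := by
            by_contra h; rw [if_neg h] at hp; simp at hp
          simp only [Finset.coe_image, Set.mem_image, Finset.mem_coe, Finset.mem_Icc]
          exact ⟨p.2, ⟨by omega, by omega⟩, by rw [← h2]⟩
        rw [finsum_eq_finset_sum_of_support_subset _ hsupp, Finset.sum_image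
          (by intro a _ b _ h; simpa using (Prod.ext_iff.mp h).2)]
        have hterm : ∀ k ∈ Finset.Icc (1:ℤ) (-i),
            (if k + i ≤ 0 ∧ 1 ≤ k then
              Lam i (k + i) k * Lam (-i) k (k + i) - Lam i k (k + i) * Lam (-i) (k + i) k
            else 0) = -1 := by
          intro k hk
          simp only [Finset.mem_Icc] at hk
          rw [if_pos ⟨by omega, hk.1⟩]
          simp only [Lam]
          split_ifs <;> first | ring1 | (exfalso; omega)
        rw [Finset.sum_congr rfl hterm]
        simp only [Finset.sum_const, Int.card_Icc, nsmul_eq_mul]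
        have h4 : ((-i + 1 - 1).toNat : ℂ) = -(i : ℂ) := by
          have h5 : ((-i + 1 - 1).toNat : ℤ) = -i := by omega
          exact_mod_cast congrArg (Int.cast : ℤ → ℂ) h5
        rw [h4]
        ring
      · subst hi
        have hz : (fun p : ℤ × ℤ => if p.1 ≤ 0 ∧ 1 ≤ p.2 then
            Lam 0 p.1 p.2 * Lam (-0) p.2 p.1 - Lam 0 p.2 p.1 * Lam (-0) p.1 p.2 else 0)
            = fun _ => (0:ℂ) := by
          funext p
          simp only [Lam]
          split_ifs <;> first | ring1 | (exfalso; omega)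
        show (∑ᶠ p : ℤ × ℤ, _) = _
        rw [hz]
        simp
      · -- i ≥ 1
        have hsupp : (Function.support fun p : ℤ × ℤ => if p.1 ≤ 0 ∧ 1 ≤ p.2 then
            Lam i p.1 p.2 * Lam (-i) p.2 p.1 - Lam i p.2 p.1 * Lam (-i) p.1 p.2 else 0)
            ⊆ ↑((Finset.Icc (1 - i) (0:ℤ)).image (fun k => ((k, k + i) : ℤ × ℤ))) := by
          intro p hp
          rw [Function.mem_support] at hp
          have h1 : p.1 ≤ 0 ∧ 1 ≤ p.2 := by
            by_contra h; rw [if_neg h] at hp; exact hp rfl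
          rw [if_pos h1] at hp
          simp only [Lam] at hp
          rw [if_neg (by omega : ¬ p.1 = p.2 + i)] at hp
          have h2 : p.2 = p.1 + i := by
            by_contra h; rw [if_neg h] at hp; simp at hp
          simp only [Finset.coe_image, Set.mem_image, Finset.mem_coe, Finset.mem_Icc]
          exact ⟨p.1, ⟨by omega, by omega⟩, by rw [← h2]⟩
        rw [finsum_eq_finset_sum_of_support_subset _ hsupp, Finset.sum_image
          (by intro a _ b _ h; simpa using (Prod.ext_iff.mp h).1)]
        have hterm : ∀ k ∈ Finset.Icc (1 - i) (0:ℤ),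
            (if k ≤ 0 ∧ 1 ≤ k + i then
              Lam i k (k + i) * Lam (-i) (k + i) k - Lam i (k + i) k * Lam (-i) k (k + i)
            else 0) = 1 := by
          intro k hk
          simp only [Finset.mem_Icc] at hk
          rw [if_pos ⟨hk.2, by omega⟩]
          simp only [Lam]
          split_ifs <;> first | ring1 | (exfalso; omega)
        rw [Finset.sum_congr rfl hterm]
        simp only [Finset.sum_const, Int.card_Icc, nsmul_eq_mul]
        have h4 : ((0 + 1 - (1 - i)).toNat : ℂ) = (i : ℂ) := by
          have h5 : ((0 + 1 - (1 - i)).toNat : ℤ) = i := by omega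
          exact_mod_cast congrArg (Int.cast : ℤ → ℂ) h5
        rw [h4]
        ring
    · rw [if_neg hij]
      have hz : (fun p : ℤ × ℤ => if p.1 ≤ 0 ∧ 1 ≤ p.2 then
          Lam i p.1 p.2 * Lam j p.2 p.1 - Lam i p.2 p.1 * Lam j p.1 p.2 else 0)
          = fun _ => (0:ℂ) := by
        funext p
        simp only [Lam]
        split_ifs <;> first | ring1 | (exfalso; omega)
      show (∑ᶠ p : ℤ × ℤ, _) = 0
      rw [hz]
      exact finsum_zero
end

section
/- The images of the affine sl₂ generators under the embedding into a_∞ (e_k ↦ Σ_s E_{2s+1, 2(s+k)+2}, etc., K ↦ c) commute with Λ_{2j} for every j ≠ 0: [e_k, Λ_{2j}] = [f_k, Λ_{2j}] = [h_k, Λ_{2j}] = 0 in a_∞. -/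
/-- Image of `e_k` in `a_∞`: `Σ_s E_{2s+1, 2(s+k)+2}`. -/
def eMat (k : ℤ) : ℤ → ℤ → ℂ :=
  fun p q => if p % 2 = 1 ∧ q = p + 2 * k + 1 then 1 else 0

/-- Image of `f_k` in `a_∞`: `Σ_s E_{2s+2, 2(s+k)+1}`. -/
def fMat (k : ℤ) : ℤ → ℤ → ℂ :=
  fun p q => if p % 2 = 0 ∧ q = p + 2 * k - 1 then 1 else 0

/-- Image of `h_k` in `a_∞`: `Σ_s (E_{2s+1, 2(s+k)+1} - E_{2s+2, 2(s+k)+2})`. -/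
def hMat (k : ℤ) : ℤ → ℤ → ℂ :=
  fun p q => if p % 2 = 1 ∧ q = p + 2 * k then 1
    else if p % 2 = 0 ∧ q = p + 2 * k then -1 else 0

/-- Key combinatorial lemma: the alternating-parity sum over an interval from an odd
number to an even number vanishes. -/
lemma parity_sum_zero (a b : ℤ) (ha : a % 2 = 1) (hb : b % 2 = 0) :
    ∑ p ∈ Finset.Icc a b, (if p % 2 = 1 then (1 : ℂ) else -1) = 0 := by
  refine Finset.sum_involution (fun p _ => if p % 2 = 1 then p + 1 else p - 1)
    ?_ ?_ ?_ ?_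
  · intro p hp
    beta_reduce
    split_ifs <;> first | ring1 | (exfalso; omega)
  · intro p hp h
    beta_reduce
    split_ifs <;> omega
  · intro p hp
    simp only [Finset.mem_Icc] at hp ⊢
    split_ifs <;> omega
  · intro p hp
    beta_reduce
    split_ifs <;> omega

/-- The matrix part of the bracket with `Λ_m` vanishes for any `a` satisfying the
shift-invariance property `a i (q - m) = a (i + m) q`. -/
lemma matBrk_lam_eq_zero (a : ℤ → ℤ → ℂ) (m : ℤ)
    (hcomm : ∀ i q : ℤ, a i (q - m) = a (i + m) q) :
    matBrk a (Lam m) = 0 := by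
  funext i q
  show (∑ᶠ s : ℤ, (a i s * Lam m s q - Lam m i s * a s q)) = 0
  have hA : ∀ s : ℤ, s ≠ q - m → a i s * Lam m s q = 0 := by
    intro s hs
    have h : Lam m s q = 0 := by simp only [Lam]; rw [if_neg]; omega
    rw [h, mul_zero]
  have hB : ∀ s : ℤ, s ≠ i + m → Lam m i s * a s q = 0 := by
    intro s hs
    have h : Lam m i s = 0 := by simp only [Lam]; rw [if_neg]; omega
    rw [h, zero_mul]
  have hfA : (Function.support fun s => a i s * Lam m s q).Finite := by
    refine (Set.finite_singleton (q - m)).subset ?_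
    intro s hs
    simp only [Function.mem_support] at hs
    simp only [Set.mem_singleton_iff]
    by_contra h
    exact hs (hA s h)
  have hfB : (Function.support fun s => Lam m i s * a s q).Finite := by
    refine (Set.finite_singleton (i + m)).subset ?_
    intro s hs
    simp only [Function.mem_support] at hs
    simp only [Set.mem_singleton_iff]
    by_contra h
    exact hs (hB s h)
  rw [finsum_sub_distrib hfA hfB, finsum_eq_single _ (q - m) hA,
    finsum_eq_single _ (i + m) hB]
  have h1 : Lam m (q - m) q = 1 := by simp [Lam]
  have h2 : Lam m i (i + m) = 1 := by simp [Lam]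
  rw [h1, h2, mul_one, one_mul, hcomm i q, sub_self]

lemma alpha_e (k j : ℤ) : alphaCocycle (eMat k) (Lam (2 * j)) = 0 := by
  have h : ∀ p : ℤ × ℤ, (if p.1 ≤ 0 ∧ 1 ≤ p.2 then
      eMat k p.1 p.2 * Lam (2 * j) p.2 p.1 - eMat k p.2 p.1 * Lam (2 * j) p.1 p.2
      else 0) = 0 := by
    intro p
    simp only [eMat, Lam]
    split_ifs <;> first | ring1 | (exfalso; omega)
  rw [show alphaCocycle (eMat k) (Lam (2 * j)) = ∑ᶠ _ : ℤ × ℤ, (0 : ℂ) from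
    finsum_congr h, finsum_zero]

lemma alpha_f (k j : ℤ) : alphaCocycle (fMat k) (Lam (2 * j)) = 0 := by
  have h : ∀ p : ℤ × ℤ, (if p.1 ≤ 0 ∧ 1 ≤ p.2 then
      fMat k p.1 p.2 * Lam (2 * j) p.2 p.1 - fMat k p.2 p.1 * Lam (2 * j) p.1 p.2
      else 0) = 0 := by
    intro p
    simp only [fMat, Lam]
    split_ifs <;> first | ring1 | (exfalso; omega)
  rw [show alphaCocycle (fMat k) (Lam (2 * j)) = ∑ᶠ _ : ℤ × ℤ, (0 : ℂ) from
    finsum_congr h, finsum_zero]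

lemma alpha_h (k j : ℤ) (hj : j ≠ 0) : alphaCocycle (hMat k) (Lam (2 * j)) = 0 := by
  by_cases hk : k = -j
  · subst hk
    rcases lt_or_gt_of_ne hj with hneg | hpos
    · -- j < 0 : support lies on `{(p, p - 2j) : 2j+1 ≤ p ≤ 0}`
      have key : alphaCocycle (hMat (-j)) (Lam (2 * j)) =
          ∑ᶠ p : ℤ × ℤ, (fun p : ℤ × ℤ => if p.1 ≤ 0 ∧ 1 ≤ p.2 then
            hMat (-j) p.1 p.2 * Lam (2 * j) p.2 p.1 -
              hMat (-j) p.2 p.1 * Lam (2 * j) p.1 p.2 else 0) p := rfl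
      rw [key, finsum_eq_finset_sum_of_support_subset _
        (s := (Finset.Icc (2 * j + 1) 0).image (fun p : ℤ => ((p, p - 2 * j) : ℤ × ℤ)))]
      · rw [Finset.sum_image (by
          intro x hx y hy hxy
          simpa using congrArg Prod.fst hxy)]
        have hval : ∀ p ∈ Finset.Icc (2 * j + 1) 0,
            (fun p : ℤ × ℤ => if p.1 ≤ 0 ∧ 1 ≤ p.2 then
              hMat (-j) p.1 p.2 * Lam (2 * j) p.2 p.1 -
                hMat (-j) p.2 p.1 * Lam (2 * j) p.1 p.2 else 0) ((p, p - 2 * j)) =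
            (if p % 2 = 1 then (1 : ℂ) else -1) := by
          intro p hp
          simp only [Finset.mem_Icc] at hp
          simp only [hMat, Lam]
          split_ifs <;> first | ring1 | (exfalso; omega)
        rw [Finset.sum_congr rfl hval, parity_sum_zero _ _ (by omega) (by omega)]
      · intro p hp
        simp only [Function.mem_support] at hp
        simp only [Finset.coe_image, Set.mem_image, Finset.mem_coe, Finset.mem_Icc]
        simp only [hMat, Lam] at hp
        obtain ⟨x, y⟩ := p
        split_ifs at hp <;>
          first
          | (norm_num at hp; done)
          | (exfalso; omega)
          | (exact ⟨x, ⟨by omega, by omega⟩, by rw [Prod.mk.injEq]; exact ⟨rfl, by omega⟩⟩)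
    · -- j > 0 : support lies on `{(p - 2j, p) : 1 ≤ p ≤ 2j}`
      have key : alphaCocycle (hMat (-j)) (Lam (2 * j)) =
          ∑ᶠ p : ℤ × ℤ, (fun p : ℤ × ℤ => if p.1 ≤ 0 ∧ 1 ≤ p.2 then
            hMat (-j) p.1 p.2 * Lam (2 * j) p.2 p.1 -
              hMat (-j) p.2 p.1 * Lam (2 * j) p.1 p.2 else 0) p := rfl
      rw [key, finsum_eq_finset_sum_of_support_subset _
        (s := (Finset.Icc 1 (2 * j)).image (fun p : ℤ => ((p - 2 * j, p) : ℤ × ℤ)))]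
      · rw [Finset.sum_image (by
          intro x hx y hy hxy
          simpa using congrArg Prod.snd hxy)]
        have hval : ∀ p ∈ Finset.Icc 1 (2 * j),
            (fun p : ℤ × ℤ => if p.1 ≤ 0 ∧ 1 ≤ p.2 then
              hMat (-j) p.1 p.2 * Lam (2 * j) p.2 p.1 -
                hMat (-j) p.2 p.1 * Lam (2 * j) p.1 p.2 else 0) ((p - 2 * j, p)) =
            -(if p % 2 = 1 then (1 : ℂ) else -1) := by
          intro p hp
          simp only [Finset.mem_Icc] at hp
          simp only [hMat, Lam]
          split_ifs <;> first | ring1 | (exfalso; omega)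
        rw [Finset.sum_congr rfl hval, Finset.sum_neg_distrib,
          parity_sum_zero _ _ (by omega) (by omega), neg_zero]
      · intro p hp
        simp only [Function.mem_support] at hp
        simp only [Finset.coe_image, Set.mem_image, Finset.mem_coe, Finset.mem_Icc]
        simp only [hMat, Lam] at hp
        obtain ⟨x, y⟩ := p
        split_ifs at hp <;>
          first
          | (norm_num at hp; done)
          | (exfalso; omega)
          | (exact ⟨y, ⟨by omega, by omega⟩, by rw [Prod.mk.injEq]; exact ⟨by omega, rfl⟩⟩)
  · -- k ≠ -j : every summand vanishes
    have h : ∀ p : ℤ × ℤ, (if p.1 ≤ 0 ∧ 1 ≤ p.2 then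
        hMat k p.1 p.2 * Lam (2 * j) p.2 p.1 - hMat k p.2 p.1 * Lam (2 * j) p.1 p.2
        else 0) = 0 := by
      intro p
      simp only [hMat, Lam]
      split_ifs <;> first | ring1 | (exfalso; omega)
    rw [show alphaCocycle (hMat k) (Lam (2 * j)) = ∑ᶠ _ : ℤ × ℤ, (0 : ℂ) from
      finsum_congr h, finsum_zero]

/-- The images of the affine `sl₂` generators in `a_∞` commute with `Λ_{2j}` for `j ≠ 0`:
both the matrix part and the cocycle (central) part of the brackets vanish. -/
theorem stmt13 (k j : ℤ) (hj : j ≠ 0) :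
    (matBrk (eMat k) (Lam (2 * j)) = 0 ∧ alphaCocycle (eMat k) (Lam (2 * j)) = 0) ∧
    (matBrk (fMat k) (Lam (2 * j)) = 0 ∧ alphaCocycle (fMat k) (Lam (2 * j)) = 0) ∧
    (matBrk (hMat k) (Lam (2 * j)) = 0 ∧ alphaCocycle (hMat k) (Lam (2 * j)) = 0) := by
  refine ⟨⟨?_, alpha_e k j⟩, ⟨?_, alpha_f k j⟩, ⟨?_, alpha_h k j hj⟩⟩
  · refine matBrk_lam_eq_zero _ _ ?_
    intro i q
    simp only [eMat]
    exact if_congr (by omega) rfl rfl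
  · refine matBrk_lam_eq_zero _ _ ?_
    intro i q
    simp only [fMat]
    exact if_congr (by omega) rfl rfl
  · refine matBrk_lam_eq_zero _ _ ?_
    intro i q
    simp only [hMat]
    exact if_congr (by omega) rfl (if_congr (by omega) rfl rfl)
end
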